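/- Let g be in Monge form g(u,v) = (u,v,f(u,v)) with f = (1/2)(k₁u² + k₂v²) + Σ_{i+j≥3}(a_{ij}/(i!j!))u^iv^j and k₁ ≠ k₂. Then the principal curvature κ₁ (the one equal to k₁ at the origin, with principal direction (1,0)) has 2-jet at the origin: κ₁(u,v) = k₁ + a₃₀u + a₂₁v + (1/(2(k₁−k₂)))·{ [2a₂₁² + (a₄₀ − 3k₁³)(k₁−k₂)]u² + 2[2a₂₁a₁₂ + a₃₁(k₁−k₂)]uv + [2a₁₂² + (a₂₂ − k₁k₂²)(k₁−k₂)]v² } + O(u,v)³. -/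

import Mathlib

noncomputable section

/-- Partial derivative in the first variable. -/
def pdu (f : ℝ × ℝ → ℝ) (p : ℝ × ℝ) : ℝ := fderiv ℝ f p (1, 0)

/-- Partial derivative in the second variable. -/
def pdv (f : ℝ × ℝ → ℝ) (p : ℝ × ℝ) : ℝ := fderiv ℝ f p (0, 1)

/-- Coefficient `E` of the first fundamental form of the Monge surface `(u,v,f(u,v))`. -/
def Ee (f : ℝ × ℝ → ℝ) (p : ℝ × ℝ) : ℝ := 1 + (pdu f p) ^ 2

/-- Coefficient `F` of the first fundamental form. -/
def Ff (f : ℝ × ℝ → ℝ) (p : ℝ × ℝ) : ℝ := pdu f p * pdv f p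

/-- Coefficient `G` of the first fundamental form. -/
def Gg (f : ℝ × ℝ → ℝ) (p : ℝ × ℝ) : ℝ := 1 + (pdv f p) ^ 2

/-- Coefficient `L` of the second fundamental form. -/
def Ll (f : ℝ × ℝ → ℝ) (p : ℝ × ℝ) : ℝ :=
  pdu (pdu f) p / Real.sqrt (1 + (pdu f p) ^ 2 + (pdv f p) ^ 2)

/-- Coefficient `M` of the second fundamental form. -/
def Mm (f : ℝ × ℝ → ℝ) (p : ℝ × ℝ) : ℝ :=
  pdv (pdu f) p / Real.sqrt (1 + (pdu f p) ^ 2 + (pdv f p) ^ 2)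

/-- Coefficient `N` of the second fundamental form. -/
def Nn (f : ℝ × ℝ → ℝ) (p : ℝ × ℝ) : ℝ :=
  pdv (pdv f) p / Real.sqrt (1 + (pdu f p) ^ 2 + (pdv f p) ^ 2)

/-- `κ p` is a principal curvature of the Monge surface `(u,v,f(u,v))` at `p`:
it is a root of the characteristic equation
`(EG-F²)κ² - (EN-2FM+GL)κ + (LN-M²) = 0`. -/
def IsPrincipalCurvature (f : ℝ × ℝ → ℝ) (κ : ℝ × ℝ → ℝ) (p : ℝ × ℝ) : Prop :=
  (Ee f p * Gg f p - Ff f p ^ 2) * κ p ^ 2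
    - (Ee f p * Nn f p - 2 * Ff f p * Mm f p + Gg f p * Ll f p) * κ p
    + (Ll f p * Nn f p - Mm f p ^ 2) = 0

section helpers
variable {g h : ℝ × ℝ → ℝ} {p : ℝ × ℝ} {w : ℝ × ℝ} {c : ℝ}

lemma fdapp_add (hg : DifferentiableAt ℝ g p) (hh : DifferentiableAt ℝ h p) :
    fderiv ℝ (fun q => g q + h q) p w = fderiv ℝ g p w + fderiv ℝ h p w := by
  rw [fderiv_fun_add hg hh]; rfl

lemma fdapp_sub (hg : DifferentiableAt ℝ g p) (hh : DifferentiableAt ℝ h p) :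
    fderiv ℝ (fun q => g q - h q) p w = fderiv ℝ g p w - fderiv ℝ h p w := by
  rw [fderiv_fun_sub hg hh]; rfl

lemma fdapp_mul (hg : DifferentiableAt ℝ g p) (hh : DifferentiableAt ℝ h p) :
    fderiv ℝ (fun q => g q * h q) p w = fderiv ℝ g p w * h p + g p * fderiv ℝ h p w := by
  rw [fderiv_fun_mul hg hh]; simp; ring

lemma fdapp_const : fderiv ℝ (fun _ : ℝ × ℝ => c) p w = 0 := by simp

lemma fdapp_pow2 (hg : DifferentiableAt ℝ g p) :
    fderiv ℝ (fun q => g q ^ 2) p w = 2 * g p * fderiv ℝ g p w := by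
  have h2 : (fun q => g q ^ 2) = fun q => g q * g q := by funext q; ring
  rw [h2, fdapp_mul hg hg]; ring

lemma pdu_add (hg : DifferentiableAt ℝ g p) (hh : DifferentiableAt ℝ h p) :
    pdu (fun q => g q + h q) p = pdu g p + pdu h p := fdapp_add hg hh
lemma pdu_sub (hg : DifferentiableAt ℝ g p) (hh : DifferentiableAt ℝ h p) :
    pdu (fun q => g q - h q) p = pdu g p - pdu h p := fdapp_sub hg hh
lemma pdu_mul (hg : DifferentiableAt ℝ g p) (hh : DifferentiableAt ℝ h p) :
    pdu (fun q => g q * h q) p = pdu g p * h p + g p * pdu h p := fdapp_mul hg hh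
lemma pdu_const : pdu (fun _ : ℝ × ℝ => c) p = 0 := fdapp_const
lemma pdu_pow2 (hg : DifferentiableAt ℝ g p) :
    pdu (fun q => g q ^ 2) p = 2 * g p * pdu g p := fdapp_pow2 hg
lemma pdv_add (hg : DifferentiableAt ℝ g p) (hh : DifferentiableAt ℝ h p) :
    pdv (fun q => g q + h q) p = pdv g p + pdv h p := fdapp_add hg hh
lemma pdv_sub (hg : DifferentiableAt ℝ g p) (hh : DifferentiableAt ℝ h p) :
    pdv (fun q => g q - h q) p = pdv g p - pdv h p := fdapp_sub hg hh
lemma pdv_mul (hg : DifferentiableAt ℝ g p) (hh : DifferentiableAt ℝ h p) :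
    pdv (fun q => g q * h q) p = pdv g p * h p + g p * pdv h p := fdapp_mul hg hh
lemma pdv_const : pdv (fun _ : ℝ × ℝ => c) p = 0 := fdapp_const
lemma pdv_pow2 (hg : DifferentiableAt ℝ g p) :
    pdv (fun q => g q ^ 2) p = 2 * g p * pdv g p := fdapp_pow2 hg

lemma contDiff_pdu (hg : ContDiff ℝ (⊤ : ℕ∞) g) : ContDiff ℝ (⊤ : ℕ∞) (pdu g) := by
  have h1 : ContDiff ℝ (⊤ : ℕ∞) (fderiv ℝ g) := hg.fderiv_right (le_refl _)
  exact h1.clm_apply contDiff_const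

lemma contDiff_pdv (hg : ContDiff ℝ (⊤ : ℕ∞) g) : ContDiff ℝ (⊤ : ℕ∞) (pdv g) := by
  have h1 : ContDiff ℝ (⊤ : ℕ∞) (fderiv ℝ g) := hg.fderiv_right (le_refl _)
  exact h1.clm_apply contDiff_const

lemma contDiffAt_pdu (hg : ContDiffAt ℝ (⊤ : ℕ∞) g p) : ContDiffAt ℝ (⊤ : ℕ∞) (pdu g) p := by
  have h1 : ContDiffAt ℝ (⊤ : ℕ∞) (fderiv ℝ g) p := hg.fderiv_right (le_refl _)
  exact h1.clm_apply contDiffAt_const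

lemma contDiffAt_pdv (hg : ContDiffAt ℝ (⊤ : ℕ∞) g p) : ContDiffAt ℝ (⊤ : ℕ∞) (pdv g) p := by
  have h1 : ContDiffAt ℝ (⊤ : ℕ∞) (fderiv ℝ g) p := hg.fderiv_right (le_refl _)
  exact h1.clm_apply contDiffAt_const

lemma diff_of_cd (hg : ContDiff ℝ (⊤ : ℕ∞) g) : Differentiable ℝ g :=
  hg.differentiable (by simp)

lemma pdu_pdv_comm (hg : ContDiff ℝ (⊤ : ℕ∞) g) : pdu (pdv g) = pdv (pdu g) := by
  funext p
  have hg2 : ContDiff ℝ (2 : ℕ∞) g := hg.of_le (by exact_mod_cast le_top)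
  have hsymm : IsSymmSndFDerivAt ℝ g p :=
    (hg2.contDiffAt (x := p)).isSymmSndFDerivAt (by simp [minSmoothness_of_isRCLikeNormedField])
  have hfd : ContDiff ℝ (⊤ : ℕ∞) (fderiv ℝ g) := hg.fderiv_right (le_refl _)
  have hd : DifferentiableAt ℝ (fderiv ℝ g) p :=
    (hfd.differentiable (by simp)).differentiableAt
  have key : ∀ v w : ℝ × ℝ, fderiv ℝ (fun q => fderiv ℝ g q v) p w
      = fderiv ℝ (fderiv ℝ g) p w v := by
    intro v w
    have h5 : HasFDerivAt (fun q => fderiv ℝ g q v)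
        ((ContinuousLinearMap.apply ℝ ℝ v).comp (fderiv ℝ (fderiv ℝ g) p)) p :=
      (ContinuousLinearMap.apply ℝ ℝ v).hasFDerivAt.comp p hd.hasFDerivAt
    rw [h5.fderiv]; rfl
  show fderiv ℝ (fun q => fderiv ℝ g q (0,1)) p (1,0)
      = fderiv ℝ (fun q => fderiv ℝ g q (1,0)) p (0,1)
  rw [key, key]
  exact (hsymm (0,1) (1,0)).symm

lemma pdu_congr_ev {x : ℝ × ℝ} (he : g =ᶠ[nhds x] h) : pdu g x = pdu h x := by
  unfold pdu; rw [he.fderiv_eq]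
lemma pdv_congr_ev {x : ℝ × ℝ} (he : g =ᶠ[nhds x] h) : pdv g x = pdv h x := by
  unfold pdv; rw [he.fderiv_eq]

lemma ev_zero_pdu {x : ℝ × ℝ} (he : g =ᶠ[nhds x] fun _ => 0) :
    pdu g =ᶠ[nhds x] fun _ => 0 := by
  have h2 := he.eventually_nhds
  filter_upwards [h2] with y hy
  rw [pdu_congr_ev hy]; exact pdu_const
lemma ev_zero_pdv {x : ℝ × ℝ} (he : g =ᶠ[nhds x] fun _ => 0) :
    pdv g =ᶠ[nhds x] fun _ => 0 := by
  have h2 := he.eventually_nhds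
  filter_upwards [h2] with y hy
  rw [pdv_congr_ev hy]; exact pdv_const

end helpers

/-- `E*G - F^2` of the Monge surface, as an explicit function. -/
def Sf (f : ℝ × ℝ → ℝ) : ℝ × ℝ → ℝ := fun p => 1 + pdu f p ^ 2 + pdv f p ^ 2
/-- the square root normalizer -/
def Wf (f : ℝ × ℝ → ℝ) : ℝ × ℝ → ℝ := fun p => Real.sqrt (Sf f p)
/-- `W * (E*N - 2*F*M + G*L)` -/
def Bf (f : ℝ × ℝ → ℝ) : ℝ × ℝ → ℝ := fun p =>
  (1 + pdu f p ^ 2) * pdv (pdv f) p - 2 * pdu f p * pdv f p * pdv (pdu f) p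
    + (1 + pdv f p ^ 2) * pdu (pdu f) p
/-- `W^2 * (L*N - M^2)` -/
def Cf (f : ℝ × ℝ → ℝ) : ℝ × ℝ → ℝ := fun p =>
  pdu (pdu f) p * pdv (pdv f) p - pdv (pdu f) p ^ 2
set_option maxHeartbeats 1600000

/-- The 2-jet of the principal curvature `κ₁` (with `κ₁(0) = k₁`, principal direction
`(1,0)`) of a Monge form surface with `k₁ ≠ k₂`, expressed through its partial
derivatives at the origin. -/
theorem stmt9
    (f : ℝ × ℝ → ℝ) (hf : ContDiff ℝ (⊤ : ℕ∞) f)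
    (k1 k2 a30 a21 a12 a03 a40 a31 a22 : ℝ) (hk : k1 ≠ k2)
    (h00 : f 0 = 0) (h10 : pdu f 0 = 0) (h01 : pdv f 0 = 0)
    (h20 : pdu (pdu f) 0 = k1) (h11 : pdv (pdu f) 0 = 0) (h02 : pdv (pdv f) 0 = k2)
    (h30 : pdu (pdu (pdu f)) 0 = a30) (h21 : pdv (pdu (pdu f)) 0 = a21)
    (h12 : pdv (pdv (pdu f)) 0 = a12) (h03 : pdv (pdv (pdv f)) 0 = a03)
    (h40 : pdu (pdu (pdu (pdu f))) 0 = a40)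
    (h31 : pdv (pdu (pdu (pdu f))) 0 = a31)
    (h22 : pdv (pdv (pdu (pdu f))) 0 = a22)
    (κ : ℝ × ℝ → ℝ) (hκs : ContDiffAt ℝ (⊤ : ℕ∞) κ 0) (hκ0 : κ 0 = k1)
    (hκeig : ∀ᶠ p in nhds (0 : ℝ × ℝ), IsPrincipalCurvature f κ p) :
    pdu κ 0 = a30 ∧ pdv κ 0 = a21 ∧
    pdu (pdu κ) 0 = (2 * a21 ^ 2 + (a40 - 3 * k1 ^ 3) * (k1 - k2)) / (k1 - k2) ∧
    pdv (pdu κ) 0 = (2 * a21 * a12 + a31 * (k1 - k2)) / (k1 - k2) ∧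
    pdv (pdv κ) 0 = (2 * a12 ^ 2 + (a22 - k1 * k2 ^ 2) * (k1 - k2)) / (k1 - k2) := by
  -- ===== smoothness of the atoms =====
  have cfu : ContDiff ℝ (⊤ : ℕ∞) (pdu f) := contDiff_pdu hf
  have cfv : ContDiff ℝ (⊤ : ℕ∞) (pdv f) := contDiff_pdv hf
  have cfuu : ContDiff ℝ (⊤ : ℕ∞) (pdu (pdu f)) := contDiff_pdu cfu
  have cfuv : ContDiff ℝ (⊤ : ℕ∞) (pdv (pdu f)) := contDiff_pdv cfu
  have cfvv : ContDiff ℝ (⊤ : ℕ∞) (pdv (pdv f)) := contDiff_pdv cfv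
  have cg30 : ContDiff ℝ (⊤ : ℕ∞) (pdu (pdu (pdu f))) := contDiff_pdu cfuu
  have cg21 : ContDiff ℝ (⊤ : ℕ∞) (pdv (pdu (pdu f))) := contDiff_pdv cfuu
  have cg12 : ContDiff ℝ (⊤ : ℕ∞) (pdv (pdv (pdu f))) := contDiff_pdv cfuv
  have cg03 : ContDiff ℝ (⊤ : ℕ∞) (pdv (pdv (pdv f))) := contDiff_pdv cfvv
  have dfu := diff_of_cd cfu
  have dfv := diff_of_cd cfv
  have dfuu := diff_of_cd cfuu
  have dfuv := diff_of_cd cfuv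
  have dfvv := diff_of_cd cfvv
  have dg30 := diff_of_cd cg30
  have dg21 := diff_of_cd cg21
  have dg12 := diff_of_cd cg12
  have dg03 := diff_of_cd cg03
  -- ===== commutation of partial derivatives =====
  have c1 : pdu (pdv f) = pdv (pdu f) := pdu_pdv_comm hf
  have c2 : pdu (pdv (pdu f)) = pdv (pdu (pdu f)) := pdu_pdv_comm cfu
  have c3 : pdu (pdv (pdv f)) = pdv (pdv (pdu f)) := by
    rw [pdu_pdv_comm cfv, c1]
  have c4 : pdu (pdv (pdu (pdu f))) = pdv (pdu (pdu (pdu f))) := pdu_pdv_comm cfuu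
  have c5 : pdu (pdv (pdv (pdu f))) = pdv (pdv (pdu (pdu f))) := by
    rw [pdu_pdv_comm cfuv, c2]
  have c6 : pdu (pdv (pdv (pdv f))) = pdv (pdv (pdv (pdu f))) := by
    rw [pdu_pdv_comm cfvv, c3]
  -- ===== S and W facts =====
  have hSpos : ∀ p, 0 < Sf f p := by intro p; unfold Sf; positivity
  have cS : ContDiff ℝ (⊤ : ℕ∞) (Sf f) := by unfold Sf; fun_prop
  have dS := diff_of_cd cS
  have cW : ContDiff ℝ (⊤ : ℕ∞) (Wf f) := by
    rw [contDiff_iff_contDiffAt]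
    intro p
    exact (Real.contDiffAt_sqrt (hSpos p).ne').comp p cS.contDiffAt
  have dW := diff_of_cd cW
  have dWu := diff_of_cd (contDiff_pdu cW)
  have dWv := diff_of_cd (contDiff_pdv cW)
  have dSu := diff_of_cd (contDiff_pdu cS)
  have dSv := diff_of_cd (contDiff_pdv cS)
  have hW2 : ∀ p, Wf f p ^ 2 = Sf f p := fun p => Real.sq_sqrt (hSpos p).le
  have hWsq : (fun q => Wf f q ^ 2) = Sf f := funext hW2
  -- derivative formulas for S
  have hSufun : pdu (Sf f)
      = fun p => 2 * pdu f p * pdu (pdu f) p + 2 * pdv f p * pdv (pdu f) p := by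
    funext p
    show pdu (fun q => 1 + pdu f q ^ 2 + pdv f q ^ 2) p = _
    simp (disch := fun_prop) only [pdu_add, pdu_sub, pdu_mul, pdu_pow2, pdu_const]
    rw [c1]; ring
  have hSvfun : pdv (Sf f)
      = fun p => 2 * pdu f p * pdv (pdu f) p + 2 * pdv f p * pdv (pdv f) p := by
    funext p
    show pdv (fun q => 1 + pdu f q ^ 2 + pdv f q ^ 2) p = _
    simp (disch := fun_prop) only [pdv_add, pdv_sub, pdv_mul, pdv_pow2, pdv_const]
    ring
  -- derivative identities for W
  have hWufun : (fun p => 2 * Wf f p * pdu (Wf f) p) = pdu (Sf f) := by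
    funext p
    rw [← pdu_pow2 (dW p), hWsq]
  have hWvfun : (fun p => 2 * Wf f p * pdv (Wf f) p) = pdv (Sf f) := by
    funext p
    rw [← pdv_pow2 (dW p), hWsq]
    -- ===== first derivative formulas for B and C =====
  have hBufun : pdu (Bf f) = fun p =>
      (2 * pdu f p * pdu (pdu f) p) * pdv (pdv f) p + (1 + pdu f p ^ 2) * pdv (pdv (pdu f)) p
      - (2 * (pdu (pdu f) p * pdv f p + pdu f p * pdv (pdu f) p) * pdv (pdu f) p
         + 2 * pdu f p * pdv f p * pdv (pdu (pdu f)) p)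
      + ((2 * pdv f p * pdv (pdu f) p) * pdu (pdu f) p
         + (1 + pdv f p ^ 2) * pdu (pdu (pdu f)) p) := by
    funext p
    show pdu (fun q => (1 + pdu f q ^ 2) * pdv (pdv f) q
        - 2 * pdu f q * pdv f q * pdv (pdu f) q + (1 + pdv f q ^ 2) * pdu (pdu f) q) p = _
    simp (disch := fun_prop) only [pdu_add, pdu_sub, pdu_mul, pdu_pow2, pdu_const]
    rw [c1, c2, c3]; ring
  have hBvfun : pdv (Bf f) = fun p =>
      (2 * pdu f p * pdv (pdu f) p) * pdv (pdv f) p + (1 + pdu f p ^ 2) * pdv (pdv (pdv f)) p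
      - (2 * (pdv (pdu f) p * pdv f p + pdu f p * pdv (pdv f) p) * pdv (pdu f) p
         + 2 * pdu f p * pdv f p * pdv (pdv (pdu f)) p)
      + ((2 * pdv f p * pdv (pdv f) p) * pdu (pdu f) p
         + (1 + pdv f p ^ 2) * pdv (pdu (pdu f)) p) := by
    funext p
    show pdv (fun q => (1 + pdu f q ^ 2) * pdv (pdv f) q
        - 2 * pdu f q * pdv f q * pdv (pdu f) q + (1 + pdv f q ^ 2) * pdu (pdu f) q) p = _
    simp (disch := fun_prop) only [pdv_add, pdv_sub, pdv_mul, pdv_pow2, pdv_const]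
    ring
  have hCufun : pdu (Cf f) = fun p =>
      pdu (pdu (pdu f)) p * pdv (pdv f) p + pdu (pdu f) p * pdv (pdv (pdu f)) p
        - 2 * pdv (pdu f) p * pdv (pdu (pdu f)) p := by
    funext p
    show pdu (fun q => pdu (pdu f) q * pdv (pdv f) q - pdv (pdu f) q ^ 2) p = _
    simp (disch := fun_prop) only [pdu_add, pdu_sub, pdu_mul, pdu_pow2, pdu_const]
    try rw [c2, c3]
    try ring
  have hCvfun : pdv (Cf f) = fun p =>
      pdv (pdu (pdu f)) p * pdv (pdv f) p + pdu (pdu f) p * pdv (pdv (pdv f)) p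
        - 2 * pdv (pdu f) p * pdv (pdv (pdu f)) p := by
    funext p
    show pdv (fun q => pdu (pdu f) q * pdv (pdv f) q - pdv (pdu f) q ^ 2) p = _
    simp (disch := fun_prop) only [pdv_add, pdv_sub, pdv_mul, pdv_pow2, pdv_const]
    try ring
  -- ===== values at the origin =====
  have vS : Sf f 0 = 1 := by unfold Sf; rw [h10, h01]; norm_num
  have vW : Wf f 0 = 1 := by unfold Wf; rw [vS]; exact Real.sqrt_one
  have vSu : pdu (Sf f) 0 = 0 := by simp only [hSufun, h10, h01]; ring
  have vSv : pdv (Sf f) 0 = 0 := by simp only [hSvfun, h10, h01]; ring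
  have vWu : pdu (Wf f) 0 = 0 := by
    have E := congrFun hWufun 0
    simp only [vW, vSu] at E; linarith
  have vWv : pdv (Wf f) 0 = 0 := by
    have E := congrFun hWvfun 0
    simp only [vW, vSv] at E; linarith
  have vSuu : pdu (pdu (Sf f)) 0 = 2 * k1 ^ 2 := by
    simp only [hSufun]
    simp (disch := fun_prop) only [pdu_add, pdu_sub, pdu_mul, pdu_pow2, pdu_const]
    simp only [c1, c2, h10, h01, h20, h11, h30, h21]
    ring
  have vSuv : pdv (pdu (Sf f)) 0 = 0 := by
    simp only [hSufun]
    simp (disch := fun_prop) only [pdv_add, pdv_sub, pdv_mul, pdv_pow2, pdv_const]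
    simp only [h10, h01, h20, h11, h02, h21, h12]
    ring
  have vSvv : pdv (pdv (Sf f)) 0 = 2 * k2 ^ 2 := by
    simp only [hSvfun]
    simp (disch := fun_prop) only [pdv_add, pdv_sub, pdv_mul, pdv_pow2, pdv_const]
    simp only [h10, h01, h11, h02, h12, h03]
    ring
  have vWuu : pdu (pdu (Wf f)) 0 = k1 ^ 2 := by
    have E : pdu (fun p => 2 * Wf f p * pdu (Wf f) p) 0 = pdu (pdu (Sf f)) 0 := by
      rw [hWufun]
    simp (disch := fun_prop) only [pdu_add, pdu_sub, pdu_mul, pdu_pow2, pdu_const] at E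
    rw [vSuu] at E
    simp only [vW, vWu] at E; linarith
  have vWuv : pdv (pdu (Wf f)) 0 = 0 := by
    have E : pdv (fun p => 2 * Wf f p * pdu (Wf f) p) 0 = pdv (pdu (Sf f)) 0 := by
      rw [hWufun]
    simp (disch := fun_prop) only [pdv_add, pdv_sub, pdv_mul, pdv_pow2, pdv_const] at E
    rw [vSuv] at E
    simp only [vW, vWu, vWv] at E; linarith
  have vWvv : pdv (pdv (Wf f)) 0 = k2 ^ 2 := by
    have E : pdv (fun p => 2 * Wf f p * pdv (Wf f) p) 0 = pdv (pdv (Sf f)) 0 := by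
      rw [hWvfun]
    simp (disch := fun_prop) only [pdv_add, pdv_sub, pdv_mul, pdv_pow2, pdv_const] at E
    rw [vSvv] at E
    simp only [vW, vWv] at E; linarith
  have vB : Bf f 0 = k1 + k2 := by unfold Bf; rw [h10, h01, h20, h11, h02]; ring
  have vC : Cf f 0 = k1 * k2 := by unfold Cf; rw [h20, h11, h02]; ring
  have vBu : pdu (Bf f) 0 = a12 + a30 := by
    simp only [hBufun, h10, h01, h20, h11, h02, h12, h30, h21]; ring
  have vBv : pdv (Bf f) 0 = a03 + a21 := by
    simp only [hBvfun, h10, h01, h20, h11, h02, h03, h21, h12]; ring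
  have vCu : pdu (Cf f) 0 = a30 * k2 + k1 * a12 := by
    simp only [hCufun, h20, h11, h02, h30, h12, h21]; ring
  have vCv : pdv (Cf f) 0 = a21 * k2 + k1 * a03 := by
    simp only [hCvfun, h20, h11, h02, h21, h03, h12]; ring
  have vBuu : pdu (pdu (Bf f)) 0 = 2 * k1 ^ 2 * k2 + a22 + a40 := by
    simp only [hBufun]
    simp (disch := fun_prop) only [pdu_add, pdu_sub, pdu_mul, pdu_pow2, pdu_const]
    simp only [c1, c2, c3, c4, c5, h10, h01, h20, h11, h02, h30, h21, h12, h03, h40, h31, h22]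
    ring
  have vBuv : pdv (pdu (Bf f)) 0 = pdv (pdv (pdv (pdu f))) 0 + a31 := by
    simp only [hBufun]
    simp (disch := fun_prop) only [pdv_add, pdv_sub, pdv_mul, pdv_pow2, pdv_const]
    simp only [h10, h01, h20, h11, h02, h30, h21, h12, h03, h31, h22]
    ring
  have vBvv : pdv (pdv (Bf f)) 0 = pdv (pdv (pdv (pdv f))) 0 + 2 * k1 * k2 ^ 2 + a22 := by
    simp only [hBvfun]
    simp (disch := fun_prop) only [pdv_add, pdv_sub, pdv_mul, pdv_pow2, pdv_const]
    simp only [h10, h01, h20, h11, h02, h21, h12, h03, h22]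
    ring
  have vCuu : pdu (pdu (Cf f)) 0 = a40 * k2 + 2 * a30 * a12 + k1 * a22 - 2 * a21 ^ 2 := by
    simp only [hCufun]
    simp (disch := fun_prop) only [pdu_add, pdu_sub, pdu_mul, pdu_pow2, pdu_const]
    simp only [c2, c3, c4, c5, h20, h11, h02, h30, h21, h12, h40, h31, h22]
    ring
  have vCuv : pdv (pdu (Cf f)) 0
      = a31 * k2 + a30 * a03 + a21 * a12 + k1 * pdv (pdv (pdv (pdu f))) 0 - 2 * a12 * a21 := by
    simp only [hCufun]
    simp (disch := fun_prop) only [pdv_add, pdv_sub, pdv_mul, pdv_pow2, pdv_const]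
    simp only [h20, h11, h02, h30, h21, h12, h03, h31, h22]
    ring
  have vCvv : pdv (pdv (Cf f)) 0
      = a22 * k2 + 2 * a21 * a03 + k1 * pdv (pdv (pdv (pdv f)) ) 0 - 2 * a12 ^ 2 := by
    simp only [hCvfun]
    simp (disch := fun_prop) only [pdv_add, pdv_sub, pdv_mul, pdv_pow2, pdv_const]
    simp only [h20, h11, h02, h21, h12, h03, h22]
    ring
    -- ===== B, C smoothness =====
  have cB : ContDiff ℝ (⊤ : ℕ∞) (Bf f) := by unfold Bf; fun_prop
  have cC : ContDiff ℝ (⊤ : ℕ∞) (Cf f) := by unfold Cf; fun_prop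
  have dB := diff_of_cd cB
  have dC := diff_of_cd cC
  have dBu := diff_of_cd (contDiff_pdu cB)
  have dBv := diff_of_cd (contDiff_pdv cB)
  have dCu := diff_of_cd (contDiff_pdu cC)
  have dCv := diff_of_cd (contDiff_pdv cC)
  -- ===== κ facts =====
  have dκ0 : DifferentiableAt ℝ κ 0 := hκs.differentiableAt (by simp)
  have dκu0 : DifferentiableAt ℝ (pdu κ) 0 :=
    (contDiffAt_pdu hκs).differentiableAt (by simp)
  have dκv0 : DifferentiableAt ℝ (pdv κ) 0 :=
    (contDiffAt_pdv hκs).differentiableAt (by simp)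
  have hκev : ∀ᶠ p in nhds (0 : ℝ × ℝ), DifferentiableAt ℝ κ p := by
    have h1 : ContDiffAt ℝ (1 : ℕ∞) κ 0 := hκs.of_le (by exact_mod_cast le_top)
    have h2 := h1.eventually (by simp)
    filter_upwards [h2] with p hp
    exact hp.differentiableAt (by simp)
  -- ===== the polynomial form of the characteristic equation =====
  have hΨ : (fun p => Sf f p ^ 2 * κ p ^ 2 - Wf f p * Bf f p * κ p + Cf f p)
      =ᶠ[nhds (0 : ℝ × ℝ)] (fun _ => 0) := by
    filter_upwards [hκeig] with p hp
    have hW2p : Wf f p ^ 2 = 1 + pdu f p ^ 2 + pdv f p ^ 2 := hW2 p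
    have hWne : Wf f p ≠ 0 := (Real.sqrt_pos.mpr (hSpos p)).ne'
    have hq : Real.sqrt (1 + pdu f p ^ 2 + pdv f p ^ 2) = Wf f p := rfl
    have hL : Wf f p * Ll f p = pdu (pdu f) p := by
      unfold Ll; rw [hq]; field_simp
    have hM : Wf f p * Mm f p = pdv (pdu f) p := by
      unfold Mm; rw [hq]; field_simp
    have hN : Wf f p * Nn f p = pdv (pdv f) p := by
      unfold Nn; rw [hq]; field_simp
    simp only [IsPrincipalCurvature, Ee, Ff, Gg] at hp
    show (1 + pdu f p ^ 2 + pdv f p ^ 2) ^ 2 * κ p ^ 2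
        - Wf f p * ((1 + pdu f p ^ 2) * pdv (pdv f) p
            - 2 * pdu f p * pdv f p * pdv (pdu f) p
            + (1 + pdv f p ^ 2) * pdu (pdu f) p) * κ p
        + (pdu (pdu f) p * pdv (pdv f) p - pdv (pdu f) p ^ 2) = 0
    linear_combination (Wf f p ^ 2) * hp
      + (Wf f p * κ p * (1 + pdu f p ^ 2) - pdu (pdu f) p) * hN
      + (Wf f p * Mm f p + pdv (pdu f) p - 2 * Wf f p * κ p * (pdu f p * pdv f p)) * hM
      + (Wf f p * κ p * (1 + pdv f p ^ 2) - Wf f p * Nn f p) * hL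
      - ((1 + pdu f p ^ 2 + pdv f p ^ 2) * κ p ^ 2) * hW2p
  -- ===== first derivatives of the equation =====
  have hΨu0 := ev_zero_pdu hΨ
  have hΨv0 := ev_zero_pdv hΨ
  have hRu : ∀ᶠ p in nhds (0 : ℝ × ℝ),
      pdu (fun q => Sf f q ^ 2 * κ q ^ 2 - Wf f q * Bf f q * κ q + Cf f q) p
        = (2 * Sf f p * pdu (Sf f) p) * κ p ^ 2 + Sf f p ^ 2 * (2 * κ p * pdu κ p)
          - ((pdu (Wf f) p * Bf f p + Wf f p * pdu (Bf f) p) * κ p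
             + Wf f p * Bf f p * pdu κ p) + pdu (Cf f) p := by
    filter_upwards [hκev] with p hdp
    simp (disch := fun_prop) only [pdu_add, pdu_sub, pdu_mul, pdu_pow2, pdu_const]
    try ring
  have hRv : ∀ᶠ p in nhds (0 : ℝ × ℝ),
      pdv (fun q => Sf f q ^ 2 * κ q ^ 2 - Wf f q * Bf f q * κ q + Cf f q) p
        = (2 * Sf f p * pdv (Sf f) p) * κ p ^ 2 + Sf f p ^ 2 * (2 * κ p * pdv κ p)
          - ((pdv (Wf f) p * Bf f p + Wf f p * pdv (Bf f) p) * κ p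
             + Wf f p * Bf f p * pdv κ p) + pdv (Cf f) p := by
    filter_upwards [hκev] with p hdp
    simp (disch := fun_prop) only [pdv_add, pdv_sub, pdv_mul, pdv_pow2, pdv_const]
    try ring
  have hRu0 : (fun p => (2 * Sf f p * pdu (Sf f) p) * κ p ^ 2
        + Sf f p ^ 2 * (2 * κ p * pdu κ p)
        - ((pdu (Wf f) p * Bf f p + Wf f p * pdu (Bf f) p) * κ p
           + Wf f p * Bf f p * pdu κ p) + pdu (Cf f) p)
      =ᶠ[nhds (0 : ℝ × ℝ)] (fun _ => 0) := by
    filter_upwards [hRu, hΨu0] with p e1 e2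
    rw [← e1]; exact e2
  have hRv0 : (fun p => (2 * Sf f p * pdv (Sf f) p) * κ p ^ 2
        + Sf f p ^ 2 * (2 * κ p * pdv κ p)
        - ((pdv (Wf f) p * Bf f p + Wf f p * pdv (Bf f) p) * κ p
           + Wf f p * Bf f p * pdv κ p) + pdv (Cf f) p)
      =ᶠ[nhds (0 : ℝ × ℝ)] (fun _ => 0) := by
    filter_upwards [hRv, hΨv0] with p e1 e2
    rw [← e1]; exact e2
  have hkk : k1 - k2 ≠ 0 := sub_ne_zero.mpr hk
  -- ===== first order values =====
  have va30 : pdu κ 0 = a30 := by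
    have E := hRu0.eq_of_nhds
    simp only [vS, vSu, vW, vWu, vB, vBu, vC, vCu, hκ0] at E
    have h5 : (k1 - k2) * (pdu κ 0 - a30) = 0 := by linear_combination E
    rcases mul_eq_zero.mp h5 with h6 | h6
    · exact absurd h6 hkk
    · linarith [sub_eq_zero.mp h6]
  have va21 : pdv κ 0 = a21 := by
    have E := hRv0.eq_of_nhds
    simp only [vS, vSv, vW, vWv, vB, vBv, vC, vCv, hκ0] at E
    have h5 : (k1 - k2) * (pdv κ 0 - a21) = 0 := by linear_combination E
    rcases mul_eq_zero.mp h5 with h6 | h6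
    · exact absurd h6 hkk
    · linarith [sub_eq_zero.mp h6]
  -- ===== second order =====
  have EUU : pdu (fun p => (2 * Sf f p * pdu (Sf f) p) * κ p ^ 2
        + Sf f p ^ 2 * (2 * κ p * pdu κ p)
        - ((pdu (Wf f) p * Bf f p + Wf f p * pdu (Bf f) p) * κ p
           + Wf f p * Bf f p * pdu κ p) + pdu (Cf f) p) 0 = 0 := by
    rw [pdu_congr_ev hRu0]; exact pdu_const
  have EUV : pdv (fun p => (2 * Sf f p * pdu (Sf f) p) * κ p ^ 2
        + Sf f p ^ 2 * (2 * κ p * pdu κ p)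
        - ((pdu (Wf f) p * Bf f p + Wf f p * pdu (Bf f) p) * κ p
           + Wf f p * Bf f p * pdu κ p) + pdu (Cf f) p) 0 = 0 := by
    rw [pdv_congr_ev hRu0]; exact pdv_const
  have EVV : pdv (fun p => (2 * Sf f p * pdv (Sf f) p) * κ p ^ 2
        + Sf f p ^ 2 * (2 * κ p * pdv κ p)
        - ((pdv (Wf f) p * Bf f p + Wf f p * pdv (Bf f) p) * κ p
           + Wf f p * Bf f p * pdv κ p) + pdv (Cf f) p) 0 = 0 := by
    rw [pdv_congr_ev hRv0]; exact pdv_const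
  simp (disch := fun_prop) only [pdu_add, pdu_sub, pdu_mul, pdu_pow2, pdu_const] at EUU
  simp (disch := fun_prop) only [pdv_add, pdv_sub, pdv_mul, pdv_pow2, pdv_const] at EUV EVV
  simp only [vS, vSu, vSv, vSuu, vSuv, vSvv, vW, vWu, vWv, vWuu, vWuv, vWvv,
    vB, vBu, vBv, vBuu, vBuv, vBvv, vC, vCu, vCv, vCuu, vCuv, vCvv,
    hκ0, va30, va21] at EUU EUV EVV
  refine ⟨va30, va21, ?_, ?_, ?_⟩
  · rw [eq_div_iff hkk]; linear_combination EUU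
  · rw [eq_div_iff hkk]; linear_combination EUV
  · rw [eq_div_iff hkk]; linear_combination EVV
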